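/- Let Γ be a strongly-connected weighted digraph on n vertices with stationary distribution π and hitting time H for the random walk with transition matrix P = D⁻¹A. Then Kemeny's constant κ = Σ_v H(u,v)·π_v satisfies κ ≥ (n−1)/2, with equality if and only if Γ is a directed cycle (every vertex has exactly one out-edge, arranged in a single directed cycle through all n vertices). -/

import Mathlib

open scoped Classical
open Finset Matrix

namespace Paper

variable {V : Type*} [Fintype V] [DecidableEq V]

/-- Out-degree of `u` in the weighted digraph with weight function `ω`. -/
noncomputable def deg (ω : V → V → ℝ) (u : V) : ℝ := ∑ v, ω u v

/-- A weighted digraph is strongly connected if every vertex can reach every other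
vertex along edges of positive weight. -/
def StronglyConnected (ω : V → V → ℝ) : Prop :=
  ∀ u v : V, Relation.ReflTransGen (fun a b => 0 < ω a b) u v

/-- The combinatorial Laplacian `L = D - A` of a weighted digraph. -/
noncomputable def lap (ω : V → V → ℝ) : Matrix V V ℝ :=
  Matrix.of fun u v => (if u = v then deg ω u else 0) - ω u v

/-- The transition probability matrix `P = D⁻¹ A` of the random walk. -/
noncomputable def trans (ω : V → V → ℝ) : Matrix V V ℝ :=
  Matrix.of fun u v => ω u v / deg ω u

/-- `G` is the Moore–Penrose pseudoinverse of `M` (four Penrose conditions). -/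
def IsMoorePenrose (M G : Matrix V V ℝ) : Prop :=
  M * G * M = M ∧ G * M * G = G ∧ (M * G)ᵀ = M * G ∧ (G * M)ᵀ = G * M

/-- `v` reaches `r` under iteration of the parent function `f`. -/
def Reaches (f : V → V) (v r : V) : Prop := ∃ k : ℕ, f^[k] v = r

/-- `f` encodes a spanning in-tree of the weighted digraph `ω` rooted at `r`:
every non-root vertex has its unique out-edge `(v, f v)` an edge of the digraph,
the root is a fixed point, and every vertex reaches the root. -/
def IsInTree (ω : V → V → ℝ) (r : V) (f : V → V) : Prop :=
  f r = r ∧ (∀ v, v ≠ r → 0 < ω v (f v)) ∧ ∀ v, Reaches f v r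

/-- The weight of the spanning in-tree encoded by `f` with root `r`. -/
noncomputable def treeWeight (ω : V → V → ℝ) (r : V) (f : V → V) : ℝ :=
  ∏ v ∈ Finset.univ.erase r, ω v (f v)

/-- `τ_r`: total weight of spanning in-trees rooted at `r`. -/
noncomputable def tau (ω : V → V → ℝ) (r : V) : ℝ :=
  ∑ f ∈ Finset.univ.filter (fun f : V → V => IsInTree ω r f), treeWeight ω r f

/-- `f` encodes a rooted spanning 2-forest with (distinct) roots `r₁`, `r₂`. -/
def IsForest2 (ω : V → V → ℝ) (r₁ r₂ : V) (f : V → V) : Prop :=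
  r₁ ≠ r₂ ∧ f r₁ = r₁ ∧ f r₂ = r₂ ∧ (∀ v, v ≠ r₁ → v ≠ r₂ → 0 < ω v (f v)) ∧
    ∀ v, Reaches f v r₁ ∨ Reaches f v r₂

/-- The weight of the rooted spanning 2-forest encoded by `f` with roots `r₁`, `r₂`. -/
noncomputable def forestWeight (ω : V → V → ℝ) (r₁ r₂ : V) (f : V → V) : ℝ :=
  ∏ v ∈ (Finset.univ.erase r₁).erase r₂, ω v (f v)

/-- The component of the root `b`: vertices reaching `b` under `f`. -/
noncomputable def comp (f : V → V) (b : V) : Finset V :=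
  Finset.univ.filter (fun z => Reaches f z b)

/-! ### Undirected weighted graphs, edges as unordered pairs -/

/-- Weighted degree in an undirected weighted graph given by `ωs : Sym2 V → ℝ`. -/
noncomputable def degS (ωs : Sym2 V → ℝ) (u : V) : ℝ := ∑ v, ωs s(u, v)

/-- The volume of an undirected weighted graph. -/
noncomputable def volS (ωs : Sym2 V → ℝ) : ℝ := ∑ u, degS ωs u

/-- Connectivity of an undirected weighted graph. -/
def ConnectedW (ωs : Sym2 V → ℝ) : Prop :=
  ∀ u v : V, Relation.ReflTransGen (fun a b => 0 < ωs s(a, b)) u v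

/-- An edge set `E` is a spanning tree of the weighted undirected graph `ωs`. -/
def IsWTree (ωs : Sym2 V → ℝ) (E : Finset (Sym2 V)) : Prop :=
  (∀ e ∈ E, 0 < ωs e) ∧ (SimpleGraph.fromEdgeSet (E : Set (Sym2 V))).IsAcyclic ∧
    (SimpleGraph.fromEdgeSet (E : Set (Sym2 V))).Connected

/-- An edge set `E` is a spanning 2-forest of the weighted undirected graph `ωs`
(acyclic, with exactly two connected components). -/
def IsWTwoForest (ωs : Sym2 V → ℝ) (E : Finset (Sym2 V)) : Prop :=
  (∀ e ∈ E, 0 < ωs e) ∧ (SimpleGraph.fromEdgeSet (E : Set (Sym2 V))).IsAcyclic ∧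
    Nat.card (SimpleGraph.fromEdgeSet (E : Set (Sym2 V))).ConnectedComponent = 2

/-- The weight of a subgraph given by an edge set. -/
noncomputable def wgt (ωs : Sym2 V → ℝ) (E : Finset (Sym2 V)) : ℝ := ∏ e ∈ E, ωs e

/-- Total weight of spanning trees of the weighted undirected graph `ωs`. -/
noncomputable def tauW (ωs : Sym2 V → ℝ) : ℝ :=
  ∑ E ∈ Finset.univ.filter (fun E : Finset (Sym2 V) => IsWTree ωs E), wgt ωs E

/-- The combinatorial Laplacian of a weighted undirected graph. -/
noncomputable def lapW (ωs : Sym2 V → ℝ) : Matrix V V ℝ :=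
  Matrix.of fun u v => (if u = v then degS ωs u else 0) - ωs s(u, v)

/-! ### Simple graphs -/

/-- An edge set `E` is a spanning tree of the simple graph `G`. -/
def IsSTree (G : SimpleGraph V) (E : Finset (Sym2 V)) : Prop :=
  (E : Set (Sym2 V)) ⊆ G.edgeSet ∧ (SimpleGraph.fromEdgeSet (E : Set (Sym2 V))).IsAcyclic ∧
    (SimpleGraph.fromEdgeSet (E : Set (Sym2 V))).Connected

/-- An edge set `E` is a spanning 2-forest of the simple graph `G`. -/
def IsSTwoForest (G : SimpleGraph V) (E : Finset (Sym2 V)) : Prop :=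
  (E : Set (Sym2 V)) ⊆ G.edgeSet ∧ (SimpleGraph.fromEdgeSet (E : Set (Sym2 V))).IsAcyclic ∧
    Nat.card (SimpleGraph.fromEdgeSet (E : Set (Sym2 V))).ConnectedComponent = 2

/-- The number of spanning trees of the simple graph `G`. -/
noncomputable def treeCount (G : SimpleGraph V) : ℕ :=
  (Finset.univ.filter (fun E : Finset (Sym2 V) => IsSTree G E)).card


set_option linter.unusedSectionVars false

section Aux

variable {ω : V → V → ℝ} {π : V → ℝ} {H : V → V → ℝ}

lemma deg_nonneg (hnn : ∀ u v, 0 ≤ ω u v) (u : V) : 0 ≤ deg ω u :=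
  Finset.sum_nonneg fun v _ => hnn u v

lemma trans_apply (ω : V → V → ℝ) (u v : V) : trans ω u v = ω u v / deg ω u := rfl

lemma deg_pos (hnn : ∀ u v, 0 ≤ ω u v) (hπpos : ∀ v, 0 < π v)
    (hπsum : ∑ v, π v = 1) (hπstat : ∀ v, ∑ u, π u * trans ω u v = π v) (u : V) :
    0 < deg ω u := by
  have h1 : ∑ u, π u * (deg ω u / deg ω u) = 1 := by
    calc ∑ u, π u * (deg ω u / deg ω u)
        = ∑ u, ∑ v, π u * (ω u v / deg ω u) := by
          refine Finset.sum_congr rfl fun u _ => ?_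
          rw [← Finset.mul_sum, ← Finset.sum_div]
          rfl
      _ = ∑ v, ∑ u, π u * (ω u v / deg ω u) := Finset.sum_comm
      _ = ∑ v, π v := Finset.sum_congr rfl fun v _ => hπstat v
      _ = 1 := hπsum
  have h2 : ∑ u, π u * (1 - deg ω u / deg ω u) = 0 := by
    have : ∑ u, π u * (1 - deg ω u / deg ω u)
        = ∑ u, π u - ∑ u, π u * (deg ω u / deg ω u) := by
      rw [← Finset.sum_sub_distrib]
      exact Finset.sum_congr rfl fun u _ => by ring
    rw [this, hπsum, h1, sub_self]
  have hterm : ∀ x ∈ Finset.univ, (0:ℝ) ≤ π x * (1 - deg ω x / deg ω x) := by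
    intro x _
    rcases eq_or_ne (deg ω x) 0 with h | h
    · rw [h]; simp [(hπpos x).le]
    · rw [div_self h]; simp
  have h3 := (Finset.sum_eq_zero_iff_of_nonneg hterm).1 h2 u (Finset.mem_univ u)
  rcases eq_or_ne (deg ω u) 0 with h | h
  · exfalso
    rw [h] at h3
    simp at h3
    exact absurd h3 (ne_of_gt (hπpos u))
  · exact lt_of_le_of_ne (deg_nonneg hnn u) (Ne.symm h)

lemma row_sum (hdeg : ∀ u, 0 < deg ω u) (u : V) :
    ∑ w, ω u w / deg ω u = 1 := by
  rw [← Finset.sum_div]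
  exact div_self (ne_of_gt (hdeg u))

/-- Mean return time identity: `∑_w P(v,w) H(w,v) = 1/π_v - 1`. -/
lemma return_time (hπpos : ∀ v, 0 < π v) (hπsum : ∑ v, π v = 1)
    (hπstat : ∀ v, ∑ u, π u * trans ω u v = π v)
    (hH0 : ∀ v, H v v = 0)
    (hHrec : ∀ u v, u ≠ v → H u v = 1 + ∑ w, (ω u w / deg ω u) * H w v) (v : V) :
    ∑ w, (ω v w / deg ω v) * H w v = 1 / π v - 1 := by
  set T := ∑ w, (ω v w / deg ω v) * H w v with hT
  set S := ∑ u, π u * H u v with hS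
  have step1 : S = ∑ u ∈ Finset.univ.erase v, π u * H u v := by
    rw [hS]
    exact (Finset.sum_erase _ (by rw [hH0, mul_zero])).symm
  have key : ∑ u, π u * ∑ w, (ω u w / deg ω u) * H w v = S := by
    calc ∑ u, π u * ∑ w, (ω u w / deg ω u) * H w v
        = ∑ u, ∑ w, (π u * (ω u w / deg ω u)) * H w v := by
          refine Finset.sum_congr rfl fun u _ => ?_
          rw [Finset.mul_sum]
          exact Finset.sum_congr rfl fun w _ => by ring
      _ = ∑ w, (∑ u, π u * (ω u w / deg ω u)) * H w v := by
          rw [Finset.sum_comm]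
          exact Finset.sum_congr rfl fun w _ => (Finset.sum_mul _ _ _).symm
      _ = ∑ w, π w * H w v :=
          Finset.sum_congr rfl fun w _ => congrArg (fun x => x * H w v) (hπstat w)
      _ = S := rfl
  have step2 : S = (1 - π v) + (S - π v * T) := by
    have hterm : ∀ u ∈ Finset.univ.erase v,
        π u * H u v = π u + π u * ∑ w, (ω u w / deg ω u) * H w v := by
      intro u hu
      rw [hHrec u v (Finset.ne_of_mem_erase hu)]; ring
    calc S = ∑ u ∈ Finset.univ.erase v, π u * H u v := step1
      _ = ∑ u ∈ Finset.univ.erase v,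
            (π u + π u * ∑ w, (ω u w / deg ω u) * H w v) :=
          Finset.sum_congr rfl hterm
      _ = (∑ u ∈ Finset.univ.erase v, π u)
            + ∑ u ∈ Finset.univ.erase v, π u * ∑ w, (ω u w / deg ω u) * H w v :=
          Finset.sum_add_distrib
      _ = (1 - π v) + (S - π v * T) := by
          rw [Finset.sum_erase_eq_sub (Finset.mem_univ v), hπsum,
            Finset.sum_erase_eq_sub (Finset.mem_univ v), key]
  have hπv := hπpos v
  have : π v * T = 1 - π v := by linarith
  field_simp
  linarith [this]


/-- Minimum principle: if `g` is superharmonic off `t`, its minimum is attained at `t`. -/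
lemma min_principle (hnn : ∀ u v, 0 ≤ ω u v) (hsc : StronglyConnected ω)
    (hdeg : ∀ u, 0 < deg ω u) (g : V → ℝ) (t : V)
    (hsup : ∀ z, z ≠ t → ∑ w, (ω z w / deg ω z) * g w ≤ g z) :
    ∀ w, g t ≤ g w := by
  obtain ⟨z₀, -, hz₀⟩ := Finset.exists_min_image Finset.univ g ⟨t, Finset.mem_univ t⟩
  have hz₀' : ∀ w, g z₀ ≤ g w := fun w => hz₀ w (Finset.mem_univ w)
  suffices h : g t = g z₀ by intro w; rw [h]; exact hz₀' w
  have main : ∀ z, Relation.ReflTransGen (fun a b => 0 < ω a b) z t →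
      g z = g z₀ → g t = g z₀ := by
    intro z hpath
    induction hpath using Relation.ReflTransGen.head_induction_on with
    | refl => exact fun h => h
    | @head a c hac hcb ih =>
      intro ha
      rcases eq_or_ne a t with rfl | hat
      · exact ha
      · apply ih
        have h1 : ∑ w, (ω a w / deg ω a) * g w ≤ g z₀ := ha ▸ hsup a hat
        have h2 : ∑ w, (ω a w / deg ω a) * g z₀ = g z₀ := by
          rw [← Finset.sum_mul, row_sum hdeg, one_mul]
        have h3 : ∑ w, (ω a w / deg ω a) * (g w - g z₀) = 0 := by
          have : ∑ w, (ω a w / deg ω a) * (g w - g z₀)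
              = (∑ w, (ω a w / deg ω a) * g w) - ∑ w, (ω a w / deg ω a) * g z₀ := by
            rw [← Finset.sum_sub_distrib]
            exact Finset.sum_congr rfl fun w _ => by ring
          have hge : (0:ℝ) ≤ ∑ w, (ω a w / deg ω a) * (g w - g z₀) :=
            Finset.sum_nonneg fun w _ =>
              mul_nonneg (div_nonneg (hnn a w) (hdeg a).le) (sub_nonneg.2 (hz₀' w))
          rw [this, h2] at *
          linarith
          
        have h4 := (Finset.sum_eq_zero_iff_of_nonneg (fun w _ =>
            mul_nonneg (div_nonneg (hnn a w) (hdeg a).le) (sub_nonneg.2 (hz₀' w)))).1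
            h3 c (Finset.mem_univ c)
        have hpc : 0 < ω a c / deg ω a := div_pos hac (hdeg a)
        have := mul_eq_zero.1 h4
        rcases this with h | h
        · exact absurd h (ne_of_gt hpc)
        · linarith [sub_eq_zero.1 h]
  exact main z₀ (hsc z₀ t) rfl

/-- `∑_w P(u,w) H(w,v) = H(u,v) - 1` for `u ≠ v`. -/
lemma sum_p_H (hHrec : ∀ u v, u ≠ v → H u v = 1 + ∑ w, (ω u w / deg ω u) * H w v)
    {u v : V} (huv : u ≠ v) :
    ∑ w, (ω u w / deg ω u) * H w v = H u v - 1 := by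
  have := hHrec u v huv; linarith

/-- The function `w ↦ H(w,v) - H(w,u)` attains its minimum at `v`. -/
lemma g_min (hnn : ∀ u v, 0 ≤ ω u v) (hsc : StronglyConnected ω)
    (hdeg : ∀ u, 0 < deg ω u) (hπpos : ∀ v, 0 < π v) (hπsum : ∑ v, π v = 1)
    (hπstat : ∀ v, ∑ u, π u * trans ω u v = π v)
    (hH0 : ∀ v, H v v = 0)
    (hHrec : ∀ u v, u ≠ v → H u v = 1 + ∑ w, (ω u w / deg ω u) * H w v)
    {u v : V} (huv : u ≠ v) :
    ∀ w, -(H v u) ≤ H w v - H w u := by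
  have hsplit : ∀ z : V, ∑ w, (ω z w / deg ω z) * (H w v - H w u)
      = (∑ w, (ω z w / deg ω z) * H w v) - ∑ w, (ω z w / deg ω z) * H w u := by
    intro z
    rw [← Finset.sum_sub_distrib]
    exact Finset.sum_congr rfl fun w _ => by ring
  have hmin := min_principle hnn hsc hdeg (fun w => H w v - H w u) v ?_
  · intro w
    have := hmin w
    rwa [hH0, zero_sub] at this
  · intro z hzv
    beta_reduce
    rw [hsplit z]
    rcases eq_or_ne z u with rfl | hzu
    · rw [sum_p_H hHrec hzv,
        return_time hπpos hπsum hπstat hH0 hHrec z, hH0]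
      have := hπpos z
      have h1 : 0 < 1 / π z := by positivity
      linarith
    · rw [sum_p_H hHrec hzv, sum_p_H hHrec hzu]
      linarith

/-- Commute time lower bound: `1/π_u ≤ H(u,v) + H(v,u)` for `u ≠ v`. -/
lemma pair_ineq (hnn : ∀ u v, 0 ≤ ω u v) (hsc : StronglyConnected ω)
    (hdeg : ∀ u, 0 < deg ω u) (hπpos : ∀ v, 0 < π v) (hπsum : ∑ v, π v = 1)
    (hπstat : ∀ v, ∑ u, π u * trans ω u v = π v)
    (hH0 : ∀ v, H v v = 0)
    (hHrec : ∀ u v, u ≠ v → H u v = 1 + ∑ w, (ω u w / deg ω u) * H w v)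
    {u v : V} (huv : u ≠ v) :
    1 / π u ≤ H u v + H v u := by
  have hgm := g_min hnn hsc hdeg hπpos hπsum hπstat hH0 hHrec huv
  have hlow : ∑ w, (ω u w / deg ω u) * (-(H v u))
      ≤ ∑ w, (ω u w / deg ω u) * (H w v - H w u) :=
    Finset.sum_le_sum fun w _ =>
      mul_le_mul_of_nonneg_left (hgm w) (div_nonneg (hnn u w) (hdeg u).le)
  rw [← Finset.sum_mul, row_sum hdeg, one_mul] at hlow
  have hval : ∑ w, (ω u w / deg ω u) * (H w v - H w u) = H u v - 1 / π u := by
    have hsplit : ∑ w, (ω u w / deg ω u) * (H w v - H w u)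
        = (∑ w, (ω u w / deg ω u) * H w v) - ∑ w, (ω u w / deg ω u) * H w u := by
      rw [← Finset.sum_sub_distrib]
      exact Finset.sum_congr rfl fun w _ => by ring
    rw [hsplit, sum_p_H hHrec huv, return_time hπpos hπsum hπstat hH0 hHrec u]
    ring
  rw [hval] at hlow
  linarith

/-- Equality case of the commute-time bound: every out-neighbour of `u` lies on
a shortest route, i.e. `H(w,v) - H(w,u) = -H(v,u)`. -/
lemma pair_eq (hnn : ∀ u v, 0 ≤ ω u v) (hsc : StronglyConnected ω)
    (hdeg : ∀ u, 0 < deg ω u) (hπpos : ∀ v, 0 < π v) (hπsum : ∑ v, π v = 1)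
    (hπstat : ∀ v, ∑ u, π u * trans ω u v = π v)
    (hH0 : ∀ v, H v v = 0)
    (hHrec : ∀ u v, u ≠ v → H u v = 1 + ∑ w, (ω u w / deg ω u) * H w v)
    {u v : V} (huv : u ≠ v) (heq : H u v + H v u = 1 / π u) :
    ∀ w, 0 < ω u w → H w v - H w u = -(H v u) := by
  have hgm := g_min hnn hsc hdeg hπpos hπsum hπstat hH0 hHrec huv
  have hval : ∑ w, (ω u w / deg ω u) * ((H w v - H w u) - (-(H v u))) = 0 := by
    have hsplit : ∑ w, (ω u w / deg ω u) * ((H w v - H w u) - (-(H v u)))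
        = ((∑ w, (ω u w / deg ω u) * H w v) - ∑ w, (ω u w / deg ω u) * H w u)
          + (∑ w, (ω u w / deg ω u)) * H v u := by
      rw [← Finset.sum_sub_distrib, Finset.sum_mul, ← Finset.sum_add_distrib]
      exact Finset.sum_congr rfl fun w _ => by ring
    rw [hsplit, sum_p_H hHrec huv, return_time hπpos hπsum hπstat hH0 hHrec u,
      row_sum hdeg, one_mul]
    linarith
  intro w hw
  have h4 := (Finset.sum_eq_zero_iff_of_nonneg (fun w _ =>
      mul_nonneg (div_nonneg (hnn u w) (hdeg u).le)
        (sub_nonneg.2 (hgm w)))).1 hval w (Finset.mem_univ w)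
  rcases mul_eq_zero.1 h4 with h | h
  · exact absurd h (ne_of_gt (div_pos hw (hdeg u)))
  · linarith [sub_eq_zero.1 h]

/-- The Kemeny vector `u ↦ ∑_v H(u,v) π_v` is harmonic. -/
lemma k_harmonic (hπpos : ∀ v, 0 < π v) (hπsum : ∑ v, π v = 1)
    (hπstat : ∀ v, ∑ u, π u * trans ω u v = π v)
    (hH0 : ∀ v, H v v = 0)
    (hHrec : ∀ u v, u ≠ v → H u v = 1 + ∑ w, (ω u w / deg ω u) * H w v) (u : V) :
    ∑ v, H u v * π v = ∑ w, (ω u w / deg ω u) * ∑ v, H w v * π v := by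
  calc ∑ v, H u v * π v
      = ∑ v ∈ Finset.univ.erase u, H u v * π v :=
        (Finset.sum_erase _ (by rw [hH0, zero_mul])).symm
    _ = ∑ v ∈ Finset.univ.erase u,
          (π v + ∑ w, (ω u w / deg ω u) * (H w v * π v)) := by
        refine Finset.sum_congr rfl fun v hv => ?_
        rw [hHrec u v (Finset.ne_of_mem_erase hv).symm, add_mul, one_mul,
          Finset.sum_mul]
        congr 1
        exact Finset.sum_congr rfl fun w _ => by ring
    _ = (∑ v ∈ Finset.univ.erase u, π v)
          + ∑ v ∈ Finset.univ.erase u, ∑ w, (ω u w / deg ω u) * (H w v * π v) :=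
        Finset.sum_add_distrib
    _ = (1 - π u) + ∑ w, (ω u w / deg ω u)
          * ∑ v ∈ Finset.univ.erase u, H w v * π v := by
        rw [Finset.sum_erase_eq_sub (Finset.mem_univ u), hπsum, Finset.sum_comm]
        congr 1
        exact Finset.sum_congr rfl fun w _ => (Finset.mul_sum _ _ _).symm
    _ = (1 - π u) + ∑ w, (ω u w / deg ω u)
          * ((∑ v, H w v * π v) - H w u * π u) := by
        congr 1
        refine Finset.sum_congr rfl fun w _ => ?_
        rw [Finset.sum_erase_eq_sub (Finset.mem_univ u)]
    _ = (1 - π u) + ((∑ w, (ω u w / deg ω u) * ∑ v, H w v * π v)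
          - (∑ w, (ω u w / deg ω u) * H w u) * π u) := by
        congr 1
        rw [Finset.sum_mul, ← Finset.sum_sub_distrib]
        exact Finset.sum_congr rfl fun w _ => by ring
    _ = ∑ w, (ω u w / deg ω u) * ∑ v, H w v * π v := by
        rw [return_time hπpos hπsum hπstat hH0 hHrec u]
        have h0 : π u ≠ 0 := (hπpos u).ne'
        have h : (1 / π u - 1) * π u = 1 - π u := by
          field_simp
        rw [h]; ring

/-- The Kemeny vector is constant. -/
lemma k_const (hnn : ∀ u v, 0 ≤ ω u v) (hsc : StronglyConnected ω)
    (hdeg : ∀ u, 0 < deg ω u)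
    (hπpos : ∀ v, 0 < π v) (hπsum : ∑ v, π v = 1)
    (hπstat : ∀ v, ∑ u, π u * trans ω u v = π v)
    (hH0 : ∀ v, H v v = 0)
    (hHrec : ∀ u v, u ≠ v → H u v = 1 + ∑ w, (ω u w / deg ω u) * H w v)
    (u u' : V) :
    ∑ v, H u v * π v = ∑ v, H u' v * π v := by
  have h1 : ∀ t w : V, (∑ v, H t v * π v) ≤ ∑ v, H w v * π v := by
    intro t
    refine min_principle hnn hsc hdeg (fun z => ∑ v, H z v * π v) t fun z _ => ?_
    beta_reduce
    exact le_of_eq (k_harmonic hπpos hπsum hπstat hH0 hHrec z).symm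
  exact le_antisymm (h1 u u') (h1 u' u)

/-- Double-sum representation of twice Kemeny's constant. -/
lemma double_sum (hnn : ∀ u v, 0 ≤ ω u v) (hsc : StronglyConnected ω)
    (hdeg : ∀ u, 0 < deg ω u)
    (hπpos : ∀ v, 0 < π v) (hπsum : ∑ v, π v = 1)
    (hπstat : ∀ v, ∑ u, π u * trans ω u v = π v)
    (hH0 : ∀ v, H v v = 0)
    (hHrec : ∀ u v, u ≠ v → H u v = 1 + ∑ w, (ω u w / deg ω u) * H w v)
    (u : V) :
    2 * (∑ v, H u v * π v)
      = ∑ a, ∑ b ∈ Finset.univ.erase a, π a * π b * (H a b + H b a) := by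
  have e1 : ∑ a, ∑ b, π a * (H a b * π b) = ∑ v, H u v * π v := by
    calc ∑ a, ∑ b, π a * (H a b * π b)
        = ∑ a, π a * ∑ b, H a b * π b :=
          Finset.sum_congr rfl fun a _ => (Finset.mul_sum _ _ _).symm
      _ = ∑ a, π a * ∑ v, H u v * π v :=
          Finset.sum_congr rfl fun a _ => by
            rw [k_const hnn hsc hdeg hπpos hπsum hπstat hH0 hHrec a u]
      _ = ∑ v, H u v * π v := by rw [← Finset.sum_mul, hπsum, one_mul]
  have e2 : ∑ a, ∑ b, π a * (H b a * π b) = ∑ v, H u v * π v := by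
    rw [← e1, Finset.sum_comm]
    exact Finset.sum_congr rfl fun a _ => Finset.sum_congr rfl fun b _ => by ring
  calc 2 * (∑ v, H u v * π v)
      = (∑ a, ∑ b, π a * (H a b * π b)) + ∑ a, ∑ b, π a * (H b a * π b) := by
        rw [e1, e2]; ring
    _ = ∑ a, ∑ b, π a * π b * (H a b + H b a) := by
        rw [← Finset.sum_add_distrib]
        refine Finset.sum_congr rfl fun a _ => ?_
        rw [← Finset.sum_add_distrib]
        exact Finset.sum_congr rfl fun b _ => by ring
    _ = ∑ a, ∑ b ∈ Finset.univ.erase a, π a * π b * (H a b + H b a) := by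
        refine Finset.sum_congr rfl fun a _ => ?_
        exact (Finset.sum_erase _ (by rw [hH0, add_zero, mul_zero])).symm

/-- The slack in the pairwise bound is nonnegative, summing to `n - 1`. -/
lemma offdiag_pi_sum (hπsum : ∑ v, π v = 1) :
    ∑ a, ∑ b ∈ Finset.univ.erase a, π b = (Fintype.card V : ℝ) - 1 := by
  have : ∀ a : V, ∑ b ∈ Finset.univ.erase a, π b = 1 - π a := fun a => by
    rw [Finset.sum_erase_eq_sub (Finset.mem_univ a), hπsum]
  rw [Finset.sum_congr rfl fun a _ => this a, Finset.sum_sub_distrib, hπsum,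
    Finset.sum_const, Finset.card_univ, nsmul_eq_mul, mul_one]

lemma gauss_sum_real : ∀ n : ℕ, ∑ k ∈ Finset.range n, (k : ℝ) = n * (n - 1) / 2 := by
  intro n
  induction n with
  | zero => simp
  | succ n ih =>
    rw [Finset.sum_range_succ, ih]
    push_cast
    ring

lemma no_short_cycle (σ : Equiv.Perm V) (hcyc : ∀ a b : V, ∃ k : ℕ, (σ ^ k) a = b)
    (u : V) (k : ℕ) (hk : 0 < k) (hkn : k < Fintype.card V) : (σ ^ k) u ≠ u := by
  intro heqq
  have hmod : ∀ j : ℕ, (σ ^ j) u = (σ ^ (j % k)) u := by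
    intro j
    conv_lhs => rw [← Nat.div_add_mod j k]
    rw [add_comm, pow_add, Equiv.Perm.mul_apply, pow_mul]
    set q := j / k
    set x := (σ ^ (j % k)) u with hx
    induction q with
    | zero => simp [hx]
    | succ q ihq =>
      rw [pow_succ, Equiv.Perm.mul_apply, heqq]
      exact ihq
  have himg : Finset.univ ⊆ (Finset.range k).image (fun j => (σ ^ j) u) := by
    intro b _
    obtain ⟨j, hj⟩ := hcyc u b
    exact Finset.mem_image.2 ⟨j % k, Finset.mem_range.2 (Nat.mod_lt j hk),
      by rw [← hmod j, hj]⟩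
  have h1 : Fintype.card V ≤ k := by
    calc Fintype.card V = Finset.univ.card := (Finset.card_univ).symm
      _ ≤ ((Finset.range k).image (fun j => (σ ^ j) u)).card := Finset.card_le_card himg
      _ ≤ (Finset.range k).card := Finset.card_image_le
      _ = k := Finset.card_range k
  omega

/-- If the digraph is a directed cycle, Kemeny's constant equals `(n-1)/2`. -/
lemma cycle_case (hnn : ∀ u v, 0 ≤ ω u v)
    (hπpos : ∀ v, 0 < π v) (hπsum : ∑ v, π v = 1)
    (hπstat : ∀ v, ∑ u, π u * trans ω u v = π v)
    (hH0 : ∀ v, H v v = 0)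
    (hHrec : ∀ u v, u ≠ v → H u v = 1 + ∑ w, (ω u w / deg ω u) * H w v)
    (σ : Equiv.Perm V) (hiff : ∀ a b : V, 0 < ω a b ↔ b = σ a)
    (hcyc : ∀ a b : V, ∃ k : ℕ, (σ ^ k) a = b) (u : V) :
    ∑ v, H u v * π v = ((Fintype.card V : ℝ) - 1) / 2 := by
  have hzero : ∀ a b, b ≠ σ a → ω a b = 0 := by
    intro a b hb
    have hnp : ¬ 0 < ω a b := fun hp => hb ((hiff a b).1 hp)
    linarith [hnn a b]
  have hdegeq : ∀ a, deg ω a = ω a (σ a) := by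
    intro a
    exact Finset.sum_eq_single (σ a) (fun b _ hb => hzero a b hb)
      (fun h => absurd (Finset.mem_univ _) h)
  have hωσ : ∀ a, 0 < ω a (σ a) := fun a => (hiff a (σ a)).2 rfl
  have hsum_p : ∀ (a : V) (f : V → ℝ), ∑ w, (ω a w / deg ω a) * f w = f (σ a) := by
    intro a f
    rw [Finset.sum_eq_single (σ a) (fun b _ hb => by rw [hzero a b hb, zero_div, zero_mul])
      (fun h => absurd (Finset.mem_univ _) h)]
    rw [hdegeq a, div_self (hωσ a).ne', one_mul]
  have hπσ : ∀ a, π (σ a) = π a := by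
    intro a
    have := hπstat (σ a)
    rw [Finset.sum_eq_single a (fun b _ hb => ?_) (fun h => absurd (Finset.mem_univ _) h)]
      at this
    · rw [← this, trans_apply, hdegeq a, div_self (hωσ a).ne', mul_one]
    · have hne : σ a ≠ σ b := fun h => hb (σ.injective h.symm)
      rw [trans_apply, hzero b (σ a) hne, zero_div, mul_zero]
  have hπpow : ∀ (k : ℕ) (a : V), π ((σ ^ k) a) = π a := by
    intro k a
    induction k with
    | zero => simp
    | succ k ih => rw [pow_succ', Equiv.Perm.mul_apply, hπσ, ih]
  have hπconst : ∀ a b : V, π a = π b := by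
    intro a b
    obtain ⟨k, hk⟩ := hcyc a b
    rw [← hk, hπpow]
  have hcard : 0 < Fintype.card V := Fintype.card_pos_iff.2 ⟨u⟩
  have hn0 : ((Fintype.card V : ℝ)) ≠ 0 := by positivity
  have hπval : ∀ v : V, π v = 1 / (Fintype.card V : ℝ) := by
    intro v
    have h1 : ∑ a, π a = (Fintype.card V : ℝ) * π v := by
      rw [Finset.sum_congr rfl fun a _ => hπconst a v, Finset.sum_const,
        Finset.card_univ, nsmul_eq_mul]
    rw [hπsum] at h1
    field_simp
    linarith
  have Hval : ∀ k : ℕ, k < Fintype.card V → ∀ a : V, H a ((σ ^ k) a) = k := by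
    intro k
    induction k with
    | zero => intro _ a; simp [hH0]
    | succ k ih =>
      intro hk a
      have hne : a ≠ (σ ^ (k + 1)) a :=
        (no_short_cycle σ hcyc a (k + 1) (Nat.succ_pos k) hk).symm
      rw [hHrec a _ hne, hsum_p a (fun w => H w ((σ ^ (k + 1)) a))]
      have hstep : (σ ^ (k + 1)) a = (σ ^ k) (σ a) := by
        rw [pow_succ, Equiv.Perm.mul_apply]
      rw [hstep, ih (Nat.lt_of_succ_lt hk) (σ a)]
      push_cast
      ring
  have hinj : Set.InjOn (fun k => (σ ^ k) u) (Finset.range (Fintype.card V)) := by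
    intro i hi j hj hij
    simp only [Finset.coe_range, Set.mem_Iio] at hi hj
    by_contra hne
    rcases Nat.lt_or_ge i j with h | h
    · have : (σ ^ (j - i)) ((σ ^ i) u) = (σ ^ i) u := by
        rw [← Equiv.Perm.mul_apply, ← pow_add, Nat.sub_add_cancel h.le]
        exact hij.symm
      exact no_short_cycle σ hcyc ((σ ^ i) u) (j - i) (by omega) (by omega) this
    · have hlt : j < i := by omega
      have : (σ ^ (i - j)) ((σ ^ j) u) = (σ ^ j) u := by
        rw [← Equiv.Perm.mul_apply, ← pow_add, Nat.sub_add_cancel hlt.le]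
        exact hij
      exact no_short_cycle σ hcyc ((σ ^ j) u) (i - j) (by omega) (by omega) this
  have himg : (Finset.range (Fintype.card V)).image (fun k => (σ ^ k) u)
      = Finset.univ := by
    apply Finset.eq_univ_of_card
    rw [Finset.card_image_of_injOn hinj, Finset.card_range]
  calc ∑ v, H u v * π v
      = ∑ v, H u v * (1 / (Fintype.card V : ℝ)) :=
        Finset.sum_congr rfl fun v _ => by rw [hπval v]
    _ = (∑ v, H u v) * (1 / (Fintype.card V : ℝ)) := (Finset.sum_mul _ _ _).symm
    _ = (∑ k ∈ Finset.range (Fintype.card V), H u ((σ ^ k) u))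
          * (1 / (Fintype.card V : ℝ)) := by
        rw [← himg, Finset.sum_image fun i hi j hj h => hinj hi hj h]
    _ = (∑ k ∈ Finset.range (Fintype.card V), (k : ℝ))
          * (1 / (Fintype.card V : ℝ)) := by
        congr 1
        exact Finset.sum_congr rfl fun k hk => Hval k (Finset.mem_range.1 hk) u
    _ = ((Fintype.card V : ℝ) - 1) / 2 := by
        rw [gauss_sum_real]
        field_simp

end Aux

/-- **Tight lower bound for Kemeny's constant.**
For a strongly-connected weighted digraph on `n` vertices, Kemeny's constant
`κ = Σ_v H(u,v)·π_v` is at least `(n-1)/2`, with equality if and only if `Γ` is a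
directed cycle: there is a permutation `σ` forming a single cycle through all the
vertices such that the edges of `Γ` are exactly the pairs `(a, σ a)`. -/
theorem kemeny_constant_lower_bound
    {V : Type*} [Fintype V] [DecidableEq V]
    (ω : V → V → ℝ) (hnn : ∀ u v, 0 ≤ ω u v) (hloop : ∀ v, ω v v = 0)
    (hsc : StronglyConnected ω)
    (π : V → ℝ) (hπpos : ∀ v, 0 < π v) (hπsum : ∑ v, π v = 1)
    (hπstat : ∀ v, ∑ u, π u * trans ω u v = π v)
    (H : V → V → ℝ) (hH0 : ∀ v, H v v = 0)
    (hHrec : ∀ u v, u ≠ v → H u v = 1 + ∑ w, (ω u w / deg ω u) * H w v) :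
    (∀ u : V, ((Fintype.card V : ℝ) - 1) / 2 ≤ ∑ v, H u v * π v) ∧
      ((∀ u : V, ∑ v, H u v * π v = ((Fintype.card V : ℝ) - 1) / 2) ↔
        ∃ σ : Equiv.Perm V, (∀ a b : V, 0 < ω a b ↔ b = σ a) ∧
          ∀ a b : V, ∃ k : ℕ, (σ ^ k) a = b) := by
  classical
  have hdeg : ∀ u, 0 < deg ω u := deg_pos hnn hπpos hπsum hπstat
  have hV : Nonempty V := by
    by_contra h
    have : IsEmpty V := not_nonempty_iff.mp h
    rw [Finset.univ_eq_empty, Finset.sum_empty] at hπsum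
    exact absurd hπsum (by norm_num)
  obtain ⟨u0⟩ := hV
  have hlb : (Fintype.card V : ℝ) - 1
      ≤ ∑ a, ∑ b ∈ Finset.univ.erase a, π a * π b * (H a b + H b a) := by
    rw [← offdiag_pi_sum hπsum]
    refine Finset.sum_le_sum fun a _ => Finset.sum_le_sum fun b hb => ?_
    have hab : a ≠ b := (Finset.ne_of_mem_erase hb).symm
    have hp := pair_ineq hnn hsc hdeg hπpos hπsum hπstat hH0 hHrec hab
    have hπa := hπpos a
    have hπb := hπpos b
    calc π b = π a * π b * (1 / π a) := by field_simp
      _ ≤ π a * π b * (H a b + H b a) :=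
        mul_le_mul_of_nonneg_left hp (by positivity)
  have part1 : ∀ u : V, ((Fintype.card V : ℝ) - 1) / 2 ≤ ∑ v, H u v * π v := by
    intro u
    have hds := double_sum hnn hsc hdeg hπpos hπsum hπstat hH0 hHrec u
    linarith
  refine ⟨part1, ?_, ?_⟩
  · -- equality implies directed cycle
    intro heqall
    have hds := double_sum hnn hsc hdeg hπpos hπsum hπstat hH0 hHrec u0
    have hnonneg : ∀ a ∈ Finset.univ, ∀ b ∈ Finset.univ.erase a,
        (0:ℝ) ≤ π a * π b * (H a b + H b a) - π b := by
      intro a _ b hb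
      have hab : a ≠ b := (Finset.ne_of_mem_erase hb).symm
      have hp := pair_ineq hnn hsc hdeg hπpos hπsum hπstat hH0 hHrec hab
      have hπa := hπpos a
      have hπb := hπpos b
      have hle : π b ≤ π a * π b * (H a b + H b a) := by
        calc π b = π a * π b * (1 / π a) := by field_simp
          _ ≤ π a * π b * (H a b + H b a) :=
            mul_le_mul_of_nonneg_left hp (by positivity)
      linarith
    have hsl : ∑ a, ∑ b ∈ Finset.univ.erase a,
        (π a * π b * (H a b + H b a) - π b) = 0 := by
      have hsplit : ∑ a, ∑ b ∈ Finset.univ.erase a,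
            (π a * π b * (H a b + H b a) - π b)
          = (∑ a, ∑ b ∈ Finset.univ.erase a, π a * π b * (H a b + H b a))
            - ∑ a, ∑ b ∈ Finset.univ.erase a, π b := by
        rw [← Finset.sum_sub_distrib]
        exact Finset.sum_congr rfl fun a _ => Finset.sum_sub_distrib _ _
      rw [hsplit, ← hds, heqall u0, offdiag_pi_sum hπsum]
      ring
    have hzero : ∀ a b : V, a ≠ b → π a * π b * (H a b + H b a) - π b = 0 := by
      intro a b hab
      have houter := (Finset.sum_eq_zero_iff_of_nonneg
        (fun a ha => Finset.sum_nonneg (fun b hb => hnonneg a ha b hb))).1 hsl a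
        (Finset.mem_univ a)
      exact (Finset.sum_eq_zero_iff_of_nonneg
        (fun b hb => hnonneg a (Finset.mem_univ a) b hb)).1 houter b
        (Finset.mem_erase.2 ⟨hab.symm, Finset.mem_univ b⟩)
    have hpair : ∀ a b : V, a ≠ b → H a b + H b a = 1 / π a := by
      intro a b hab
      have h5 : ((H a b + H b a) * π a - 1) * π b = 0 := by
        linear_combination hzero a b hab
      rcases mul_eq_zero.1 h5 with h | h
      · rw [eq_div_iff (hπpos a).ne']; linarith
      · exact absurd h (hπpos b).ne'
    -- each vertex has a unique out-neighbour
    have huniq : ∀ a : V, ∃ w, 0 < ω a w ∧ ∀ w', 0 < ω a w' → w' = w := by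
      intro a
      have hex : ∃ w, 0 < ω a w := by
        by_contra h
        push_neg at h
        have : deg ω a ≤ 0 := Finset.sum_nonpos fun w _ => h w
        exact absurd (hdeg a) (not_lt.2 this)
      obtain ⟨w1, hw1⟩ := hex
      refine ⟨w1, hw1, fun w2 hw2 => ?_⟩
      by_contra hne
      have hw1a : w1 ≠ a := fun h => by
        rw [h, hloop a] at hw1; exact lt_irrefl 0 hw1
      have hw2a : w2 ≠ a := fun h => by
        rw [h, hloop a] at hw2; exact lt_irrefl 0 hw2
      have e1 := pair_eq hnn hsc hdeg hπpos hπsum hπstat hH0 hHrec hw1a.symm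
        (hpair a w1 hw1a.symm) w2 hw2
      have e2 := pair_eq hnn hsc hdeg hπpos hπsum hπstat hH0 hHrec hw2a.symm
        (hpair a w2 hw2a.symm) w1 hw1
      have hcomm := pair_ineq hnn hsc hdeg hπpos hπsum hπstat hH0 hHrec
        (show w1 ≠ w2 from fun h => hne h.symm)
      have hπw1 := hπpos w1
      have hposinv : (0:ℝ) < 1 / π w1 := by positivity
      linarith
    choose σ₀ hσpos hσuniq using huniq
    have hiff : ∀ a b : V, 0 < ω a b ↔ b = σ₀ a :=
      fun a b => ⟨fun h => (hσuniq a b h).symm ▸ rfl, fun h => h ▸ hσpos a⟩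
    have hreach : ∀ x y : V, ∃ k : ℕ, σ₀^[k] x = y := by
      intro x y
      have h := hsc x y
      induction h with
      | refl => exact ⟨0, rfl⟩
      | tail hxb hbc ih =>
        obtain ⟨k, hk⟩ := ih
        refine ⟨k + 1, ?_⟩
        rw [Function.iterate_succ_apply', hk]
        exact ((hiff _ _).1 hbc).symm
    have hsurj : Function.Surjective σ₀ := by
      intro a
      obtain ⟨k, hk⟩ := hreach (σ₀ a) a
      exact ⟨σ₀^[k] a,
        by rw [← Function.iterate_succ_apply' σ₀ k a, Function.iterate_succ_apply, hk]⟩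
    have hbij : Function.Bijective σ₀ := Finite.surjective_iff_bijective.1 hsurj
    have hpow : ∀ (k : ℕ) (x : V), ((Equiv.ofBijective σ₀ hbij) ^ k) x = σ₀^[k] x := by
      intro k
      induction k with
      | zero => intro x; simp
      | succ k ih =>
        intro x
        rw [pow_succ', Equiv.Perm.mul_apply, Function.iterate_succ_apply']
        rw [ih x]
        rfl
    refine ⟨Equiv.ofBijective σ₀ hbij, fun a b => hiff a b, fun a b => ?_⟩
    obtain ⟨k, hk⟩ := hreach a b
    exact ⟨k, by rw [hpow]; exact hk⟩
  · rintro ⟨σ, hiff, hcyc⟩ u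
    exact cycle_case hnn hπpos hπsum hπstat hH0 hHrec σ hiff hcyc u

end Paper
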